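/- Let f : ℝⁿ → ℝⁿ be piecewise affine with pieces (f_i, C_i), i = 1,…,N, and suppose f is a bijection of ℝⁿ onto ℝⁿ. Then all the Jacobians J_i have the same sign: either J_i > 0 for every i, or J_i < 0 for every i. -/

import Mathlib

/-- `Eu n` is the Euclidean space `ℝⁿ`. -/
noncomputable abbrev Eu (n : ℕ) := EuclideanSpace ℝ (Fin n)

/-- A closed convex polyhedron in `ℝⁿ`: a finite intersection of closed half-spaces. -/
def IsPolyhedron {n : ℕ} (C : Set (Eu n)) : Prop :=
  ∃ (m : ℕ) (l : Fin m → (Eu n →ₗ[ℝ] ℝ)) (c : Fin m → ℝ),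
    C = {x | ∀ i, l i x ≤ c i}

/-- `f : ℝⁿ → ℝⁿ` is piecewise affine with pieces `(F i, C i)`, `i : Fin N`:
each `F i` is an affine map, each `C i` is a closed convex polyhedron with nonempty
interior, the `C i` cover `ℝⁿ`, their interiors are pairwise disjoint, and `f`
agrees with `F i` on `C i`. -/
def IsPiecewiseAffine {n N : ℕ} (f : Eu n → Eu n)
    (F : Fin N → (Eu n →ᵃ[ℝ] Eu n)) (C : Fin N → Set (Eu n)) : Prop :=
  (∀ i, IsPolyhedron (C i)) ∧
  (∀ i, (interior (C i)).Nonempty) ∧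
  (⋃ i, C i) = Set.univ ∧
  (∀ i j, i ≠ j → interior (C i) ∩ interior (C j) = ∅) ∧
  (∀ i, ∀ x ∈ C i, f x = F i x)

open Set Metric MeasureTheory Filter

theorem poly_closed {n : ℕ} {C : Set (Eu n)} (h : IsPolyhedron C) : IsClosed C := by
  obtain ⟨m, l, c, rfl⟩ := h
  have : {x : Eu n | ∀ i, l i x ≤ c i} = ⋂ i, {x | l i x ≤ c i} := by
    ext x; simp [Set.mem_iInter]
  rw [this]
  exact isClosed_iInter fun i =>
    IsClosed.preimage (LinearMap.continuous_of_finiteDimensional (l i)) isClosed_Iic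

theorem poly_convex {n : ℕ} {C : Set (Eu n)} (h : IsPolyhedron C) : Convex ℝ C := by
  obtain ⟨m, l, c, rfl⟩ := h
  have : {x : Eu n | ∀ i, l i x ≤ c i} = ⋂ i, {x | l i x ≤ c i} := by
    ext x; simp [Set.mem_iInter]
  rw [this]
  exact convex_iInter fun i => convex_halfSpace_le (l i).isLinear _

theorem le_on_of_lt_on_interior {n : ℕ} {S : Set (Eu n)} (hS : Convex ℝ S)
    (hSi : (interior S).Nonempty) {g : Eu n → ℝ} (hg : Continuous g) {c : ℝ}
    (h : ∀ u ∈ interior S, g u < c) : ∀ x ∈ S, g x ≤ c := by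
  obtain ⟨y, hy⟩ := hSi
  intro x hx
  have hz : ∀ t : ℝ, t ∈ Set.Ioc (0:ℝ) 1 → (1 - t) • x + t • y ∈ interior S := fun t ht =>
    hS.combo_closure_interior_mem_interior (subset_closure hx) hy
      (by linarith [ht.2]) ht.1 (by ring)
  have hcont : Continuous fun t : ℝ => g ((1 - t) • x + t • y) := by
    apply hg.comp; continuity
  have htend : Tendsto (fun t : ℝ => g ((1 - t) • x + t • y)) (nhdsWithin (0:ℝ) (Set.Ioi 0))
      (nhds (g x)) := by
    have h0 : Tendsto (fun t : ℝ => g ((1 - t) • x + t • y)) (nhds 0) (nhds (g x)) := by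
      simpa using hcont.tendsto 0
    exact h0.mono_left nhdsWithin_le_nhds
  refine le_of_tendsto htend ?_
  filter_upwards [Ioc_mem_nhdsGT_of_mem (⟨le_refl (0:ℝ), zero_lt_one⟩ : (0:ℝ) ∈ Set.Ico (0:ℝ) 1)]
    with t ht
  exact (h _ (hz t ht)).le

theorem not_mem_of_interior {n : ℕ} {S T : Set (Eu n)}
    (hdisj : interior S ∩ interior T = ∅) (hTcv : Convex ℝ T)
    (hTi : (interior T).Nonempty) {x : Eu n} (hx : x ∈ interior S) : x ∉ T := by
  intro hxT
  obtain ⟨y, hy⟩ := hTi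
  have hz : ∀ t : ℝ, t ∈ Set.Ioc (0:ℝ) 1 → (1 - t) • x + t • y ∈ interior T := fun t ht =>
    hTcv.combo_closure_interior_mem_interior (subset_closure hxT) hy
      (by linarith [ht.2]) ht.1 (by ring)
  have hcont : Continuous fun t : ℝ => (1 - t) • x + t • y := by continuity
  have htend : Tendsto (fun t : ℝ => (1 - t) • x + t • y) (nhdsWithin (0:ℝ) (Set.Ioi 0))
      (nhds x) := by
    have h0 : Tendsto (fun t : ℝ => (1 - t) • x + t • y) (nhds 0) (nhds x) := by
      simpa using hcont.tendsto 0
    exact h0.mono_left nhdsWithin_le_nhds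
  have hev1 : ∀ᶠ t in nhdsWithin (0:ℝ) (Set.Ioi 0), (1 - t) • x + t • y ∈ interior S :=
    htend.eventually (isOpen_interior.eventually_mem hx)
  have hev2 : ∀ᶠ t in nhdsWithin (0:ℝ) (Set.Ioi 0), t ∈ Set.Ioc (0:ℝ) 1 :=
    Ioc_mem_nhdsGT_of_mem (⟨le_refl (0:ℝ), zero_lt_one⟩ : (0:ℝ) ∈ Set.Ico (0:ℝ) 1)
  obtain ⟨t, h1, h2⟩ := (hev1.and hev2).exists
  have : (1 - t) • x + t • y ∈ interior S ∩ interior T := ⟨h1, hz t h2⟩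
  rw [hdisj] at this
  exact this

theorem null_level {n : ℕ} (χ : Eu n →ₗ[ℝ] ℝ) (hχ : χ ≠ 0) (d : ℝ) :
    volume {x : Eu n | χ x = d} = 0 := by
  obtain ⟨v, hv⟩ : ∃ v, χ v ≠ 0 := by
    by_contra h; push_neg at h; exact hχ (LinearMap.ext fun u => by simp [h u])
  set x₀ := (d / χ v) • v with hx₀def
  have hx₀ : χ x₀ = d := by
    rw [hx₀def, _root_.map_smul, smul_eq_mul]; field_simp
  have hset : (fun y => x₀ + y) ⁻¹' {x : Eu n | χ x = d} = (LinearMap.ker χ : Set (Eu n)) := by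
    ext y
    simp only [Set.mem_preimage, Set.mem_setOf_eq, SetLike.mem_coe, LinearMap.mem_ker,
      map_add, hx₀]
    constructor <;> intro h <;> linarith
  have hmeas := measure_preimage_add (volume : Measure (Eu n)) x₀ {x : Eu n | χ x = d}
  rw [hset] at hmeas
  rw [← hmeas]
  refine Measure.addHaar_submodule volume _ ?_
  rw [Ne, LinearMap.ker_eq_top]
  exact hχ

theorem proportional {n : ℕ} (φ ψ : Eu n →ₗ[ℝ] ℝ) {v : Eu n} (hv : φ v ≠ 0)
    (hker : ∀ u, φ u = 0 → ψ u = 0) : ∀ u, ψ u = (ψ v / φ v) * φ u := by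
  intro u
  have h1 : φ (u - (φ u / φ v) • v) = 0 := by
    simp [map_sub, _root_.map_smul]; field_simp; ring
  have h2 := hker _ h1
  rw [map_sub, _root_.map_smul, sub_eq_zero] at h2
  rw [h2]; simp [smul_eq_mul]; field_simp
open Matrix in
theorem det_id_add_smulRight {n : ℕ} (φ : Eu n →ₗ[ℝ] ℝ) (w : Eu n) :
    LinearMap.det (LinearMap.id + φ.smulRight w) = 1 + φ w := by
  classical
  let b : Module.Basis (Fin n) ℝ (EuclideanSpace ℝ (Fin n)) :=
    (EuclideanSpace.basisFun (Fin n) ℝ).toBasis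
  rw [← LinearMap.det_toMatrix b]
  have h : (LinearMap.toMatrix b b) (LinearMap.id + φ.smulRight w)
      = 1 + Matrix.replicateCol Unit (fun i => b.repr w i) * Matrix.replicateRow Unit (fun j => φ (b j)) := by
    ext i j
    simp [LinearMap.toMatrix_apply, Matrix.one_apply, Matrix.mul_apply, mul_comm,
      Finsupp.single_apply, eq_comm]
  rw [h, Matrix.det_one_add_replicateCol_mul_replicateRow]
  congr 1
  have h2 : w = ∑ j, b.repr w j • b j := (Module.Basis.sum_repr b w).symm
  rw [dotProduct]
  conv_rhs => rw [h2]
  rw [map_sum]; simp only [_root_.map_smul, smul_eq_mul, mul_comm]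

theorem pair_null {n : ℕ} (p : Eu n) (φ ψ : Eu n →ₗ[ℝ] ℝ) (hφ0 : φ ≠ 0) (hψ0 : ψ ≠ 0)
    (hker : LinearMap.ker φ ≠ LinearMap.ker ψ) (c d : ℝ) :
    volume {q : Eu n | ∃ t ∈ Set.Ioc (0:ℝ) 1,
      φ (p + t • (q - p)) = c ∧ ψ (p + t • (q - p)) = d} = 0 := by
  set α := c - φ p with hα
  set β := d - ψ p with hβ
  have hsimpφ : ∀ (q : Eu n) (t : ℝ), φ (p + t • (q - p)) = φ p + t * (φ q - φ p) := by
    intro q t; rw [map_add, _root_.map_smul, map_sub]; simp [smul_eq_mul]; try ring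
  have hsimpψ : ∀ (q : Eu n) (t : ℝ), ψ (p + t • (q - p)) = ψ p + t * (ψ q - ψ p) := by
    intro q t; rw [map_add, _root_.map_smul, map_sub]; simp [smul_eq_mul]; try ring
  by_cases h0 : α = 0 ∧ β = 0
  · refine measure_mono_null (t := {q : Eu n | φ q = φ p}) ?_ (null_level φ hφ0 (φ p))
    rintro q ⟨t, ht, e1, _⟩
    rw [hsimpφ] at e1
    have ht0 : t ≠ 0 := ne_of_gt ht.1
    have : t * (φ q - φ p) = α := by rw [hα]; linarith
    rw [h0.1] at this
    have := mul_eq_zero.1 this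
    rcases this with h|h
    · exact absurd h ht0
    · simp only [Set.mem_setOf_eq]; linarith
  · set χ : Eu n →ₗ[ℝ] ℝ := β • φ - α • ψ with hχ
    have hχ0 : χ ≠ 0 := by
      intro hz
      rw [not_and_or] at h0
      have hβφ : β • φ = α • ψ := by
        have := sub_eq_zero.1 hz; exact this
      rcases eq_or_ne α 0 with hα0|hα0
      · have hβ0 : β ≠ 0 := by tauto
        rw [hα0, zero_smul] at hβφ
        rcases smul_eq_zero.1 hβφ with h|h
        · exact hβ0 h
        · exact hφ0 h
      · rcases eq_or_ne β 0 with hβ0|hβ0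
        · rw [hβ0, zero_smul] at hβφ
          have := (smul_eq_zero.1 hβφ.symm)
          rcases this with h|h
          · exact hα0 h
          · exact hψ0 h
        · apply hker
          have hψeq : ψ = (α⁻¹ * β) • φ := by
            rw [mul_smul, hβφ, ← mul_smul, inv_mul_cancel₀ hα0, one_smul]
          rw [hψeq, LinearMap.ker_smul _ _ (by
            intro h
            rcases mul_eq_zero.1 h with h'|h'
            · exact hα0 (inv_eq_zero.1 h')
            · exact hβ0 h')]
    refine measure_mono_null (t := {q : Eu n | χ q = χ p}) ?_ (null_level χ hχ0 (χ p))
    rintro q ⟨t, ht, e1, e2⟩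
    rw [hsimpφ] at e1
    rw [hsimpψ] at e2
    have ht0 : t ≠ 0 := ne_of_gt ht.1
    have h1 : t * (φ q - φ p) = α := by rw [hα]; linarith
    have h2 : t * (ψ q - ψ p) = β := by rw [hβ]; linarith
    have key : t * (β * (φ q - φ p) - α * (ψ q - ψ p)) = 0 := by
      have : t * (β * (φ q - φ p) - α * (ψ q - ψ p))
          = β * (t * (φ q - φ p)) - α * (t * (ψ q - ψ p)) := by ring
      rw [this, h1, h2]; ring
    have hzero : β * (φ q - φ p) - α * (ψ q - ψ p) = 0 := by
      rcases mul_eq_zero.1 key with h|h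
      · exact absurd h ht0
      · exact h
    simp only [Set.mem_setOf_eq, hχ, LinearMap.sub_apply, LinearMap.smul_apply, smul_eq_mul]
    linarith

theorem det_ne_zero_piece {n : ℕ} {f : Eu n → Eu n} {P : Eu n →ᵃ[ℝ] Eu n} {S : Set (Eu n)}
    (hSi : (interior S).Nonempty) (hfS : ∀ x ∈ S, f x = P x)
    (hinj : Function.Injective f) : LinearMap.det P.linear ≠ 0 := by
  intro hdet
  obtain ⟨v, hvmem, hv0⟩ : ∃ v, v ∈ LinearMap.ker P.linear ∧ v ≠ 0 := by
    obtain ⟨v, hv, hv'⟩ := SetLike.exists_of_lt (LinearMap.bot_lt_ker_of_det_eq_zero hdet)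
    exact ⟨v, hv, by simpa using hv'⟩
  obtain ⟨x₀, hx₀⟩ := hSi
  obtain ⟨ε, hε, hball⟩ := Metric.isOpen_iff.1 isOpen_interior x₀ hx₀
  have hvnorm : (0:ℝ) < ‖v‖ := norm_pos_iff.2 hv0
  set v' := (ε / (2 * ‖v‖)) • v with hv'
  have hc : (0:ℝ) < ε / (2 * ‖v‖) := by positivity
  have hv'0 : v' ≠ 0 := smul_ne_zero (ne_of_gt hc) hv0
  have hmem : v' + x₀ ∈ S := by
    refine interior_subset (hball ?_)
    rw [Metric.mem_ball, dist_eq_norm]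
    have : v' + x₀ - x₀ = v' := by abel
    rw [this, hv', norm_smul]
    rw [Real.norm_eq_abs, abs_of_pos hc]
    rw [div_mul_eq_mul_div]
    rw [div_lt_iff₀ (by positivity)]
    nlinarith
  have heq : f (v' + x₀) = f x₀ := by
    rw [hfS _ hmem, hfS _ (interior_subset hx₀)]
    have h1 : P (v' +ᵥ x₀) = P.linear v' +ᵥ P x₀ := P.map_vadd x₀ v'
    have h2 : P.linear v' = 0 := by
      rw [hv', _root_.map_smul, LinearMap.mem_ker.1 hvmem, smul_zero]
    simpa [h2] using h1
  have := hinj heq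
  apply hv'0
  have : v' + x₀ = 0 + x₀ := by rw [zero_add]; exact this
  exact add_right_cancel this
set_option maxHeartbeats 1000000 in
theorem facet {n : ℕ} {f : Eu n → Eu n} {P Q : Eu n →ᵃ[ℝ] Eu n} {S T : Set (Eu n)}
    (hScl : IsClosed S) (hTcl : IsClosed T) (hScv : Convex ℝ S) (hTcv : Convex ℝ T)
    (hSi : (interior S).Nonempty) (hTi : (interior T).Nonempty)
    (hdisj : interior S ∩ interior T = ∅)
    (hfS : ∀ x ∈ S, f x = P x) (hfT : ∀ x ∈ T, f x = Q x)
    (hinj : Function.Injective f)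
    (hdP : LinearMap.det P.linear ≠ 0) (hdQ : LinearMap.det Q.linear ≠ 0)
    {x : Eu n} (hxS : x ∈ S) (hxT : x ∈ T) {ε : ℝ} (hε : 0 < ε)
    (hball : Metric.ball x ε ⊆ S ∪ T) :
    (0 < LinearMap.det P.linear ↔ 0 < LinearMap.det Q.linear) := by
  classical
  have hdisj' : Disjoint (interior S) (interior T) := Set.disjoint_iff_inter_eq_empty.2 hdisj
  obtain ⟨φ, c, hφS, hφT⟩ := geometric_hahn_banach_open_open hScv.interior isOpen_interior
    hTcv.interior isOpen_interior hdisj'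
  obtain ⟨a₀, ha₀⟩ := hSi
  obtain ⟨b₀, hb₀⟩ := hTi
  have hφ0 : φ ≠ 0 := by
    rintro rfl
    have h1 := hφS a₀ ha₀
    have h2 := hφT b₀ hb₀
    simp at h1 h2
    linarith
  have hSle : ∀ u ∈ S, φ u ≤ c :=
    le_on_of_lt_on_interior hScv ⟨a₀, ha₀⟩ φ.continuous hφS
  have hTge : ∀ u ∈ T, c ≤ φ u := by
    intro u hu
    have := le_on_of_lt_on_interior hTcv ⟨b₀, hb₀⟩ φ.continuous.neg
      (c := -c) (fun w hw => by simpa using neg_lt_neg (hφT w hw)) u hu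
    simpa using this
  have hxc : φ x = c := le_antisymm (hSle x hxS) (hTge x hxT)
  obtain ⟨v₀, hv₀⟩ : ∃ v, φ v ≠ 0 := by
    by_contra h
    push_neg at h
    exact hφ0 (ContinuousLinearMap.ext fun u => by simp [h u])
  set v : Eu n := (φ v₀)⁻¹ • v₀ with hvdef
  have hφv : φ v = 1 := by
    rw [hvdef, _root_.map_smul, smul_eq_mul, inv_mul_cancel₀ hv₀]
  have hmemS : ∀ u ∈ Metric.ball x ε, φ u < c → u ∈ S := by
    intro u hu hlt
    rcases hball hu with h|h
    · exact h
    · exact absurd (hTge u h) (by linarith)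
  have hmemT : ∀ u ∈ Metric.ball x ε, c < φ u → u ∈ T := by
    intro u hu hlt
    rcases hball hu with h|h
    · exact absurd (hSle u h) (by linarith)
    · exact h
  -- points of the hyperplane inside the ball are in both S and T
  have hhyp : ∀ u ∈ Metric.ball x ε, φ u = c → u ∈ S ∧ u ∈ T := by
    intro u hu hc
    have htendS : Filter.Tendsto (fun t : ℝ => (-t) • v + u) (nhdsWithin (0:ℝ) (Set.Ioi 0))
        (nhds u) := by
      have hcont : Continuous (fun t : ℝ => (-t) • v + u) :=
        (continuous_neg.smul continuous_const).add continuous_const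
      have h0 : Filter.Tendsto (fun t : ℝ => (-t) • v + u) (nhds 0) (nhds u) := by
        simpa using hcont.tendsto (0:ℝ)
      exact h0.mono_left nhdsWithin_le_nhds
    have htendT : Filter.Tendsto (fun t : ℝ => t • v + u) (nhdsWithin (0:ℝ) (Set.Ioi 0))
        (nhds u) := by
      have hcont : Continuous (fun t : ℝ => t • v + u) :=
        (continuous_id.smul continuous_const).add continuous_const
      have h0 : Filter.Tendsto (fun t : ℝ => t • v + u) (nhds 0) (nhds u) := by
        simpa using hcont.tendsto (0:ℝ)
      exact h0.mono_left nhdsWithin_le_nhds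
    constructor
    · refine hScl.mem_of_tendsto htendS ?_
      filter_upwards [htendS.eventually (Metric.isOpen_ball.eventually_mem hu),
        self_mem_nhdsWithin] with t htb (htpos : t ∈ Set.Ioi (0:ℝ))
      refine hmemS _ htb ?_
      rw [map_add, _root_.map_smul, hφv, hc]
      simp only [smul_eq_mul, mul_one]
      linarith [Set.mem_Ioi.1 htpos]
    · refine hTcl.mem_of_tendsto htendT ?_
      filter_upwards [htendT.eventually (Metric.isOpen_ball.eventually_mem hu),
        self_mem_nhdsWithin] with t htb (htpos : t ∈ Set.Ioi (0:ℝ))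
      refine hmemT _ htb ?_
      rw [map_add, _root_.map_smul, hφv, hc]
      simp only [smul_eq_mul, mul_one]
      linarith [Set.mem_Ioi.1 htpos]
  set A := P.linear with hA
  set B := Q.linear with hB
  have hPQx : P x = Q x := by
    rw [← hfS x hxS, hfT x hxT]
  -- linear parts agree on the kernel of φ
  have hker : ∀ h : Eu n, φ h = 0 → A h = B h := by
    intro h hh
    rcases eq_or_ne h 0 with rfl|hne
    · simp
    have hhn : (0:ℝ) < ‖h‖ := norm_pos_iff.2 hne
    set t : ℝ := ε / (2 * ‖h‖) with htdef
    have ht : 0 < t := by positivity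
    have hmem : t • h + x ∈ Metric.ball x ε := by
      rw [Metric.mem_ball, dist_eq_norm]
      have : t • h + x - x = t • h := by abel
      rw [this, norm_smul, Real.norm_eq_abs, abs_of_pos ht, htdef]
      rw [div_mul_eq_mul_div, div_lt_iff₀ (by positivity)]
      nlinarith
    have hu := hhyp _ hmem (by
      rw [map_add, _root_.map_smul, hh, hxc]; simp)
    have e1 : P (t • h + x) = Q (t • h + x) := by
      rw [← hfS _ hu.1, hfT _ hu.2]
    have eP : P (t • h +ᵥ x) = A (t • h) +ᵥ P x := P.map_vadd x (t • h)
    have eQ : Q (t • h +ᵥ x) = B (t • h) +ᵥ Q x := Q.map_vadd x (t • h)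
    have e2 : A (t • h) = B (t • h) := by
      have : A (t • h) +ᵥ P x = B (t • h) +ᵥ Q x := by
        rw [← eP, ← eQ]; exact e1
      rw [hPQx] at this
      exact vadd_right_cancel _ this
    rw [_root_.map_smul, _root_.map_smul] at e2
    exact smul_right_injective (Eu n) (ne_of_gt ht) e2
  -- A is surjective
  have hAsurj : Function.Surjective A := by
    have hinjA : Function.Injective A := by
      let b : Module.Basis (Fin n) ℝ (EuclideanSpace ℝ (Fin n)) :=
        (EuclideanSpace.basisFun (Fin n) ℝ).toBasis
      have hu : IsUnit (LinearMap.toMatrix b b A).det := by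
        simp only [LinearMap.det_toMatrix]
        exact isUnit_iff_ne_zero.2 hdP
      have hcoe : (LinearEquiv.ofIsUnitDet hu : Eu n →ₗ[ℝ] Eu n) = A :=
        LinearEquiv.coe_ofIsUnitDet hu
      have happ : ∀ z, (LinearEquiv.ofIsUnitDet hu) z = A z := fun z =>
        DFunLike.congr_fun hcoe z
      intro a b' hab
      have : (LinearEquiv.ofIsUnitDet hu) a = (LinearEquiv.ofIsUnitDet hu) b' := by
        rw [happ, happ]; exact hab
      exact (LinearEquiv.ofIsUnitDet hu).injective this
    exact LinearMap.injective_iff_surjective.1 hinjA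
  obtain ⟨w, hw⟩ := hAsurj (B v - A v)
  set Tm : Eu n →ₗ[ℝ] Eu n := LinearMap.id + (φ.toLinearMap).smulRight w with hTm
  have hBA : B = A ∘ₗ Tm := by
    apply LinearMap.ext
    intro u
    have hker' := hker (u - φ u • v) (by
      rw [map_sub, _root_.map_smul, hφv]; simp)
    simp only [map_sub, _root_.map_smul] at hker'
    simp only [hTm, LinearMap.comp_apply, LinearMap.add_apply, LinearMap.id_apply,
      LinearMap.smulRight_apply, ContinuousLinearMap.coe_coe, map_add, _root_.map_smul, hw]
    have : B u = A u + φ u • (B v - A v) := by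
      rw [smul_sub]
      calc B u = (B u - φ u • B v) + φ u • B v := by abel
        _ = (A u - φ u • A v) + φ u • B v := by rw [← hker']
        _ = A u + (φ u • B v - φ u • A v) := by abel
    rw [this]
  have hτdet : LinearMap.det B = LinearMap.det A * (1 + φ w) := by
    rw [hBA, LinearMap.det_comp]
    congr 1
    exact det_id_add_smulRight φ.toLinearMap w
  rcases lt_trichotomy (1 + φ w) 0 with hτ|hτ|hτ
  · -- contradiction with injectivity
    exfalso
    set t : ℝ := ε / (2 * (‖v‖ + ‖v + w‖ + 1)) with htdef
    have hden : (0:ℝ) < ‖v‖ + ‖v + w‖ + 1 := by positivity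
    have ht : 0 < t := by positivity
    have hb1 : t • v + x ∈ Metric.ball x ε := by
      rw [Metric.mem_ball, dist_eq_norm]
      have : t • v + x - x = t • v := by abel
      rw [this, norm_smul, Real.norm_eq_abs, abs_of_pos ht, htdef]
      rw [div_mul_eq_mul_div, div_lt_iff₀ (by positivity)]
      nlinarith [norm_nonneg v, norm_nonneg (v + w)]
    have hb2 : t • (v + w) + x ∈ Metric.ball x ε := by
      rw [Metric.mem_ball, dist_eq_norm]
      have : t • (v + w) + x - x = t • (v + w) := by abel
      rw [this, norm_smul, Real.norm_eq_abs, abs_of_pos ht, htdef]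
      rw [div_mul_eq_mul_div, div_lt_iff₀ (by positivity)]
      nlinarith [norm_nonneg v, norm_nonneg (v + w)]
    have h1 : t • v + x ∈ T := by
      refine hmemT _ hb1 ?_
      rw [map_add, _root_.map_smul, hφv, hxc]
      simp only [smul_eq_mul, mul_one]
      linarith
    have h2 : t • (v + w) + x ∈ S := by
      refine hmemS _ hb2 ?_
      rw [map_add, _root_.map_smul, hxc]
      have : φ (v + w) = 1 + φ w := by rw [map_add, hφv]
      rw [this]
      simp only [smul_eq_mul]
      nlinarith
    have heqf : f (t • (v + w) + x) = f (t • v + x) := by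
      rw [hfS _ h2, hfT _ h1]
      have eP : P (t • (v + w) +ᵥ x) = A (t • (v + w)) +ᵥ P x := P.map_vadd x _
      have eQ : Q (t • v +ᵥ x) = B (t • v) +ᵥ Q x := Q.map_vadd x _
      have hAv : A (t • (v + w)) = B (t • v) := by
        rw [_root_.map_smul, _root_.map_smul, map_add, hw]
        congr 1
        abel
      calc P (t • (v + w) + x) = A (t • (v + w)) +ᵥ P x := eP
        _ = B (t • v) +ᵥ Q x := by rw [hAv, hPQx]
        _ = Q (t • v + x) := eQ.symm
    have := hinj heqf
    have hvw : t • (v + w) = t • v := by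
      have h' : t • (v + w) + x = t • v + x := this
      exact add_right_cancel h'
    have hw0 : w = 0 := by
      have h'' : v + w = v := smul_right_injective (Eu n) (ne_of_gt ht) hvw
      have h3 : v + w = v + 0 := by rw [add_zero]; exact h''
      exact add_left_cancel h3
    rw [hw0] at hτ
    simp at hτ
    linarith
  · exfalso
    rw [hτ, mul_zero] at hτdet
    exact hdQ hτdet
  · constructor
    · intro h
      rw [hτdet]
      nlinarith
    · intro h
      rw [hτdet] at h
      nlinarith
set_option maxHeartbeats 1600000 in
theorem key_lemma {n N : ℕ} (f : Eu n → Eu n) (F : Fin N → (Eu n →ᵃ[ℝ] Eu n))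
    (C : Fin N → Set (Eu n)) (hpa : IsPiecewiseAffine f F C)
    (hinj : Function.Injective f) (i j : Fin N)
    (hi : 0 < LinearMap.det (F i).linear) : 0 < LinearMap.det (F j).linear := by
  classical
  obtain ⟨hpoly, hint, hcover, hdisj, hagree⟩ := hpa
  have hcl : ∀ k, IsClosed (C k) := fun k => poly_closed (hpoly k)
  have hcv : ∀ k, Convex ℝ (C k) := fun k => poly_convex (hpoly k)
  have hdet : ∀ k, LinearMap.det (F k).linear ≠ 0 := fun k =>
    det_ne_zero_piece (hint k) (hagree k) hinj
  have hcov' : ∀ x : Eu n, ∃ k, x ∈ C k := by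
    intro x
    have : x ∈ ⋃ k, C k := by rw [hcover]; trivial
    simpa using this
  have honly : ∀ k l (x : Eu n), x ∈ interior (C k) → x ∈ C l → k = l := by
    intro k l x hxk hxl
    by_contra hkl
    exact not_mem_of_interior (hdisj k l hkl) (hcv l) (hint l) hxk hxl
  have hsep : ∀ k l, k ≠ l → ∃ (φ : Eu n →ₗ[ℝ] ℝ) (c : ℝ),
      (∀ u ∈ interior (C k), φ u < c) ∧ (∀ u ∈ interior (C l), c < φ u) := by
    intro k l hkl
    obtain ⟨φ, c, h1, h2⟩ := geometric_hahn_banach_open_open (hcv k).interior isOpen_interior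
      (hcv l).interior isOpen_interior
      (Set.disjoint_iff_inter_eq_empty.2 (hdisj k l hkl))
    exact ⟨φ.toLinearMap, c, h1, h2⟩
  choose φs cs hsep1 hsep2 using hsep
  have hφcont : ∀ k l (h : k ≠ l), Continuous (φs k l h) := fun k l h =>
    LinearMap.continuous_of_finiteDimensional _
  have hsle : ∀ k l (h : k ≠ l), ∀ u ∈ C k, φs k l h u ≤ cs k l h := fun k l h =>
    le_on_of_lt_on_interior (hcv k) (hint k) (hφcont k l h) (hsep1 k l h)
  have hsge : ∀ k l (h : k ≠ l), ∀ u ∈ C l, cs k l h ≤ φs k l h u := by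
    intro k l h u hu
    have := le_on_of_lt_on_interior (hcv l) (hint l) (hφcont k l h).neg
      (c := -(cs k l h)) (fun w hw => by simpa using neg_lt_neg (hsep2 k l h w hw)) u hu
    simpa using this
  have heqc : ∀ k l (h : k ≠ l), ∀ u, u ∈ C k → u ∈ C l → φs k l h u = cs k l h :=
    fun k l h u h1 h2 => le_antisymm (hsle k l h u h1) (hsge k l h u h2)
  have hφs0 : ∀ k l (h : k ≠ l), φs k l h ≠ 0 := by
    intro k l h hzero
    obtain ⟨u, hu⟩ := hint k
    obtain ⟨u', hu'⟩ := hint l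
    have h1 := hsep1 k l h u hu
    have h2 := hsep2 k l h u' hu'
    rw [hzero] at h1 h2
    simp at h1 h2
    linarith
  have hne0 : ∀ k l (h : k ≠ l), ∃ vv, φs k l h vv ≠ 0 := by
    intro k l h
    by_contra hz
    push_neg at hz
    exact hφs0 k l h (LinearMap.ext fun u => by simp [hz u])
  obtain ⟨p, hp⟩ := hint i
  set Bad : Fin N → Fin N → Fin N → Set (Eu n) := fun k l m =>
    {q | ∃ t ∈ Set.Ioc (0:ℝ) 1, p + t • (q - p) ∈ C k ∧ p + t • (q - p) ∈ C l ∧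
      p + t • (q - p) ∈ C m} with hBad
  have hbadnull : ∀ k l m, k ≠ l → k ≠ m → l ≠ m → volume (Bad k l m) = 0 := by
    intro k l m h1 h2 h3
    by_cases h12 : LinearMap.ker (φs k l h1) = LinearMap.ker (φs k m h2)
    · by_cases h13 : LinearMap.ker (φs k l h1) = LinearMap.ker (φs l m h3)
      · have hempty : Bad k l m = ∅ := by
          rw [Set.eq_empty_iff_forall_notMem]
          rintro q ⟨t, ht, hzk, hzl, hzm⟩
          set z := p + t • (q - p) with hz
          have e1 : φs k l h1 z = cs k l h1 := heqc k l h1 z hzk hzl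
          have e2 : φs k m h2 z = cs k m h2 := heqc k m h2 z hzk hzm
          have e3 : φs l m h3 z = cs l m h3 := heqc l m h3 z hzl hzm
          obtain ⟨v₁, hv₁⟩ := hne0 k l h1
          have hker12 : ∀ u, φs k l h1 u = 0 → φs k m h2 u = 0 := by
            intro u hu
            have h' : u ∈ LinearMap.ker (φs k l h1) := LinearMap.mem_ker.2 hu
            rw [h12] at h'
            exact LinearMap.mem_ker.1 h'
          have hker13 : ∀ u, φs k l h1 u = 0 → φs l m h3 u = 0 := by
            intro u hu
            have h' : u ∈ LinearMap.ker (φs k l h1) := LinearMap.mem_ker.2 hu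
            rw [h13] at h'
            exact LinearMap.mem_ker.1 h'
          have hp2 := proportional (φs k l h1) (φs k m h2) hv₁ hker12
          have hp3 := proportional (φs k l h1) (φs l m h3) hv₁ hker13
          obtain ⟨uk, huk⟩ := hint k
          obtain ⟨ul, hul⟩ := hint l
          obtain ⟨um, hum⟩ := hint m
          have i1 := hsep1 k l h1 uk huk
          have i2 := hsep2 k l h1 ul hul
          have i3 := hsep1 k m h2 uk huk
          have i4 := hsep2 k m h2 um hum
          have i5 := hsep1 l m h3 ul hul
          have i6 := hsep2 l m h3 um hum
          rw [hp2 uk] at i3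
          rw [hp2 um] at i4
          rw [hp3 ul] at i5
          rw [hp3 um] at i6
          have hc2 : cs k m h2 = (φs k m h2 v₁ / φs k l h1 v₁) * cs k l h1 := by
            rw [← e2, hp2 z, e1]
          have hc3 : cs l m h3 = (φs l m h3 v₁ / φs k l h1 v₁) * cs k l h1 := by
            rw [← e3, hp3 z, e1]
          rw [hc2] at i3 i4
          rw [hc3] at i5 i6
          set a2 := φs k m h2 v₁ / φs k l h1 v₁
          set a3 := φs l m h3 v₁ / φs k l h1 v₁
          set c1 := cs k l h1
          set x1 := φs k l h1 uk
          set x2 := φs k l h1 ul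
          set x3 := φs k l h1 um
          -- i1 : x1 < c1, i2 : c1 < x2, i3 : a2*x1 < a2*c1, i4 : a2*c1 < a2*x3,
          -- i5 : a3*x2 < a3*c1, i6 : a3*c1 < a3*x3
          have ha2 : 0 < a2 := by nlinarith
          have hx3 : c1 < x3 := by nlinarith
          have ha3 : a3 < 0 := by nlinarith
          nlinarith
        rw [hempty]
        exact measure_empty
      · refine measure_mono_null ?_ (pair_null p (φs k l h1) (φs l m h3) (hφs0 k l h1)
          (hφs0 l m h3) h13 (cs k l h1) (cs l m h3))
        rintro q ⟨t, ht, hzk, hzl, hzm⟩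
        exact ⟨t, ht, heqc k l h1 _ hzk hzl, heqc l m h3 _ hzl hzm⟩
    · refine measure_mono_null ?_ (pair_null p (φs k l h1) (φs k m h2) (hφs0 k l h1)
        (hφs0 k m h2) h12 (cs k l h1) (cs k m h2))
      rintro q ⟨t, ht, hzk, hzl, hzm⟩
      exact ⟨t, ht, heqc k l h1 _ hzk hzl, heqc k m h2 _ hzk hzm⟩
  obtain ⟨q, hq, hqgood⟩ : ∃ q ∈ interior (C j), ∀ k l m, k ≠ l → k ≠ m → l ≠ m →
      q ∉ Bad k l m := by
    by_contra hcon
    push_neg at hcon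
    have hsub : interior (C j) ⊆ ⋃ (k) (l) (m : Fin N),
        {q : Eu n | k ≠ l ∧ k ≠ m ∧ l ≠ m ∧ q ∈ Bad k l m} := by
      intro q hq
      obtain ⟨k, l, m, h1, h2, h3, h4⟩ := hcon q hq
      simp only [Set.mem_iUnion, Set.mem_setOf_eq]
      exact ⟨k, l, m, h1, h2, h3, h4⟩
    have hnull : volume (⋃ (k) (l) (m : Fin N),
        {q : Eu n | k ≠ l ∧ k ≠ m ∧ l ≠ m ∧ q ∈ Bad k l m}) = 0 := by
      refine measure_iUnion_null fun k => measure_iUnion_null fun l =>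
        measure_iUnion_null fun m => ?_
      by_cases h1 : k ≠ l ∧ k ≠ m ∧ l ≠ m
      · refine measure_mono_null ?_ (hbadnull k l m h1.1 h1.2.1 h1.2.2)
        intro q hq
        exact hq.2.2.2
      · have : {q : Eu n | k ≠ l ∧ k ≠ m ∧ l ≠ m ∧ q ∈ Bad k l m} = ∅ := by
          rw [Set.eq_empty_iff_forall_notMem]
          intro q hq
          exact h1 ⟨hq.1, hq.2.1, hq.2.2.1⟩
        rw [this]
        exact measure_empty
    have hpos : 0 < volume (interior (C j)) := isOpen_interior.measure_pos volume (hint j)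
    have hz := measure_mono_null hsub hnull
    rw [hz] at hpos
    exact lt_irrefl _ hpos
  set γ : ℝ → Eu n := fun t => p + t • (q - p) with hγ
  have hγcont : Continuous γ := continuous_const.add (continuous_id.smul continuous_const)
  have hγ0 : γ 0 = p := by simp [hγ]
  have hγ1 : γ 1 = q := by simp [hγ]
  have htrip : ∀ t ∈ Set.Icc (0:ℝ) 1, ∀ k l m, k ≠ l → k ≠ m → l ≠ m →
      ¬(γ t ∈ C k ∧ γ t ∈ C l ∧ γ t ∈ C m) := by
    rintro t ht k l m h1 h2 h3 ⟨hk, hl, hm⟩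
    rcases ht.1.eq_or_lt with h0|h0
    · rw [← h0, hγ0] at hk hl
      exact h1 ((honly i k p hp hk).symm.trans (honly i l p hp hl))
    · exact hqgood k l m h1 h2 h3 ⟨t, ⟨h0, ht.2⟩, hk, hl, hm⟩
  have hnbhd : ∀ x : Eu n, ∃ ε > 0, ∀ u ∈ Metric.ball x ε, ∀ k, u ∈ C k → x ∈ C k := by
    intro x
    have hclosed : IsClosed (⋃ k ∈ {k : Fin N | x ∉ C k}, C k) :=
      Set.Finite.isClosed_biUnion (Set.toFinite _) fun k _ => hcl k
    have hx : x ∈ (⋃ k ∈ {k : Fin N | x ∉ C k}, C k)ᶜ := by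
      simp only [Set.mem_compl_iff, Set.mem_iUnion, Set.mem_setOf_eq, not_exists]
      intro k hk1 hk2
      exact hk1 hk2
    obtain ⟨ε, hε, hball⟩ := Metric.isOpen_iff.1 hclosed.isOpen_compl x hx
    refine ⟨ε, hε, fun u hu k hk => ?_⟩
    by_contra hxk
    have : u ∈ ⋃ k ∈ {k : Fin N | x ∉ C k}, C k := by
      simp only [Set.mem_iUnion, Set.mem_setOf_eq]
      exact ⟨k, hxk, hk⟩
    exact (hball hu) this
  have hss : ∀ t ∈ Set.Icc (0:ℝ) 1, ∀ k l, γ t ∈ C k → γ t ∈ C l →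
      (0 < LinearMap.det (F k).linear ↔ 0 < LinearMap.det (F l).linear) := by
    intro t ht k l hk hl
    rcases eq_or_ne k l with rfl|hkl
    · exact Iff.rfl
    obtain ⟨ε, hε, hb⟩ := hnbhd (γ t)
    have hball : Metric.ball (γ t) ε ⊆ C k ∪ C l := by
      intro u hu
      obtain ⟨m, hm⟩ := hcov' u
      have hmx : γ t ∈ C m := hb u hu m hm
      by_cases hmk : m = k
      · left; rw [← hmk]; exact hm
      by_cases hml : m = l
      · right; rw [← hml]; exact hm
      exact absurd ⟨hk, hl, hmx⟩
        (htrip t ht k l m hkl (fun h => hmk h.symm) (fun h => hml h.symm))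
    exact facet (hcl k) (hcl l) (hcv k) (hcv l) (hint k) (hint l) (hdisj k l hkl)
      (hagree k) (hagree l) hinj (hdet k) (hdet l) hk hl hε hball
  set Gd : ℝ → Prop := fun t => ∀ k, γ t ∈ C k → 0 < LinearMap.det (F k).linear with hGd
  have hloc : ∀ t ∈ Set.Icc (0:ℝ) 1, ∃ ε > 0, ∀ s ∈ Set.Icc (0:ℝ) 1, |s - t| < ε →
      (Gd s ↔ Gd t) := by
    intro t ht
    obtain ⟨δ, hδ, hb⟩ := hnbhd (γ t)
    obtain ⟨ε, hε, hbs⟩ := Metric.continuous_iff.1 hγcont t δ hδ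
    refine ⟨ε, hε, fun s hs hst => ?_⟩
    have hmem : γ s ∈ Metric.ball (γ t) δ := by
      rw [Metric.mem_ball]
      exact hbs s (by rwa [Real.dist_eq])
    have hsubs : ∀ k, γ s ∈ C k → γ t ∈ C k := fun k hk => hb _ hmem k hk
    obtain ⟨m₀, hm₀⟩ := hcov' (γ s)
    have hm₀t : γ t ∈ C m₀ := hsubs m₀ hm₀
    constructor
    · intro hGs k hk
      exact (hss t ht m₀ k hm₀t hk).1 (hGs m₀ hm₀)
    · intro hGt k hk
      exact hGt k (hsubs k hk)
  have hGd0 : Gd 0 := by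
    intro k hk
    rw [hγ0] at hk
    rw [← honly i k p hp hk]
    exact hi
  by_contra hj'
  have hGd1 : ¬ Gd 1 := by
    intro hG
    exact hj' (hG j (by rw [hγ1]; exact interior_subset hq))
  choose! εf hεf1 hεf2 using hloc
  set U : Set ℝ := ⋃ (t ∈ Set.Icc (0:ℝ) 1) (_ : Gd t), Metric.ball t (εf t) with hU
  set V : Set ℝ := ⋃ (t ∈ Set.Icc (0:ℝ) 1) (_ : ¬ Gd t), Metric.ball t (εf t) with hV
  have hUopen : IsOpen U :=
    isOpen_biUnion fun t _ => isOpen_iUnion fun _ => Metric.isOpen_ball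
  have hVopen : IsOpen V :=
    isOpen_biUnion fun t _ => isOpen_iUnion fun _ => Metric.isOpen_ball
  have hcover2 : Set.Icc (0:ℝ) 1 ⊆ U ∪ V := by
    intro t ht
    by_cases h : Gd t
    · left
      simp only [hU, Set.mem_iUnion]
      exact ⟨t, ht, h, Metric.mem_ball_self (hεf1 t ht)⟩
    · right
      simp only [hV, Set.mem_iUnion]
      exact ⟨t, ht, h, Metric.mem_ball_self (hεf1 t ht)⟩
  have h0I : (0:ℝ) ∈ Set.Icc (0:ℝ) 1 := ⟨le_refl 0, zero_le_one⟩
  have h1I : (1:ℝ) ∈ Set.Icc (0:ℝ) 1 := ⟨zero_le_one, le_refl 1⟩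
  have h0U : (0:ℝ) ∈ Set.Icc (0:ℝ) 1 ∩ U := by
    refine ⟨h0I, ?_⟩
    simp only [hU, Set.mem_iUnion]
    exact ⟨0, h0I, hGd0, Metric.mem_ball_self (hεf1 0 h0I)⟩
  have h1V : (1:ℝ) ∈ Set.Icc (0:ℝ) 1 ∩ V := by
    refine ⟨h1I, ?_⟩
    simp only [hV, Set.mem_iUnion]
    exact ⟨1, h1I, hGd1, Metric.mem_ball_self (hεf1 1 h1I)⟩
  obtain ⟨s, hsI, hsU, hsV⟩ := isPreconnected_Icc U V hUopen hVopen hcover2 ⟨0, h0U⟩ ⟨1, h1V⟩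
  have hsGd : Gd s := by
    have := hsU
    simp only [hU, Set.mem_iUnion] at this
    obtain ⟨t, ht, hGt, hst⟩ := this
    rw [Metric.mem_ball, Real.dist_eq] at hst
    exact (hεf2 t ht s hsI hst).2 hGt
  have hsnGd : ¬ Gd s := by
    have := hsV
    simp only [hV, Set.mem_iUnion] at this
    obtain ⟨t, ht, hGt, hst⟩ := this
    rw [Metric.mem_ball, Real.dist_eq] at hst
    intro hGs
    exact hGt ((hεf2 t ht s hsI hst).1 hGs)
  exact hsnGd hsGd

/-- If a piecewise affine map `f : ℝⁿ → ℝⁿ` is a bijection, then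
the Jacobians (determinants of the linear parts) of all its pieces have the same
sign: all positive or all negative. -/
theorem piecewise_affine_bijective_jacobians_same_sign
    {n N : ℕ} (f : Eu n → Eu n) (F : Fin N → (Eu n →ᵃ[ℝ] Eu n))
    (C : Fin N → Set (Eu n)) (hpa : IsPiecewiseAffine f F C)
    (hbij : Function.Bijective f) :
    (∀ i, 0 < LinearMap.det (F i).linear) ∨ (∀ i, LinearMap.det (F i).linear < 0) := by
  have hdet : ∀ k, LinearMap.det (F k).linear ≠ 0 := fun k =>
    det_ne_zero_piece (hpa.2.1 k) (hpa.2.2.2.2 k) hbij.1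
  by_cases h : ∀ k, 0 < LinearMap.det (F k).linear
  · exact Or.inl h
  · push_neg at h
    obtain ⟨i, hi⟩ := h
    refine Or.inr fun k => ?_
    rcases (hdet k).lt_or_gt with hk|hk
    · exact hk
    · exact absurd (key_lemma f F C hpa hbij.1 k i hk) (not_lt.2 hi)
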